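/- Let f : ℝⁿ → ℝ be convex and differentiable with L-Lipschitz gradient, let x* be a global minimizer of f, let 0 < t ≤ 1/L, and set y = x − t·∇f(x). Then f(y) − f(x*) ≤ (1/(2t))·(‖x − x*‖² − ‖y − x*‖²). -/

import Mathlib

open scoped RealInnerProductSpace

variable {n : ℕ}

private lemma line_hasDerivAt (f : EuclideanSpace ℝ (Fin n) → ℝ)
    (f' : EuclideanSpace ℝ (Fin n) → EuclideanSpace ℝ (Fin n))
    (hdiff : ∀ x, HasGradientAt f (f' x) x) (a v : EuclideanSpace ℝ (Fin n)) (s : ℝ) :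
    HasDerivAt (fun s : ℝ => f (a + s • v)) ⟪f' (a + s • v), v⟫ s := by
  have hc : HasDerivAt (fun s : ℝ => a + s • v) v s := by
    simpa using ((hasDerivAt_id s).smul_const v).const_add a
  have hf := (hdiff (a + s • v)).hasFDerivAt
  have h2 := hf.comp_hasDerivAt s hc
  simp at h2
  exact h2

private lemma subgrad_ineq (f : EuclideanSpace ℝ (Fin n) → ℝ)
    (f' : EuclideanSpace ℝ (Fin n) → EuclideanSpace ℝ (Fin n))
    (hdiff : ∀ x, HasGradientAt f (f' x) x) (hconv : ConvexOn ℝ Set.univ f)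
    (a b : EuclideanSpace ℝ (Fin n)) :
    f a + ⟪f' a, b - a⟫ ≤ f b := by
  set v := b - a with hv
  have hφ : ConvexOn ℝ (Set.univ : Set ℝ) (fun s : ℝ => f (a + s • v)) := by
    refine ⟨convex_univ, fun p _ q _ α β hα hβ hαβ => ?_⟩
    have key : α • (a + p • v) + β • (a + q • v) = a + (α * p + β * q) • v := by
      rw [smul_add, smul_add, smul_smul, smul_smul, add_add_add_comm, ← add_smul, ← add_smul,
        hαβ, one_smul]
    have := hconv.2 (Set.mem_univ (a + p • v)) (Set.mem_univ (a + q • v)) hα hβ hαβ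
    rw [key] at this
    simpa using this
  have hd := line_hasDerivAt f f' hdiff a v 0
  have := hφ.le_slope_of_hasDerivAt (Set.mem_univ (0:ℝ)) (Set.mem_univ (1:ℝ)) one_pos
    (by simpa using hd)
  simp only [slope_def_field, div_one] at this
  simp only [zero_smul, add_zero, one_smul] at this
  rw [show a + v = b by rw [hv]; abel] at this
  -- this : ⟪f' a, v⟫ ≤ (f b - f a) / (1 - 0)
  have h2 : ⟪f' a, v⟫ ≤ f b - f a := by simpa using this
  linarith

private lemma descent_lemma (f : EuclideanSpace ℝ (Fin n) → ℝ)
    (f' : EuclideanSpace ℝ (Fin n) → EuclideanSpace ℝ (Fin n))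
    (hdiff : ∀ x, HasGradientAt f (f' x) x)
    (L : ℝ) (hlip : ∀ x y, ‖f' x - f' y‖ ≤ L * ‖x - y‖)
    (a b : EuclideanSpace ℝ (Fin n)) :
    f b ≤ f a + ⟪f' a, b - a⟫ + L / 2 * ‖b - a‖ ^ 2 := by
  set v := b - a with hv
  set h : ℝ → ℝ := fun s => f a + s * ⟪f' a, v⟫ + L / 2 * s ^ 2 * ‖v‖ ^ 2 - f (a + s • v)
    with hh
  have hder : ∀ s : ℝ, HasDerivAt h
      (⟪f' a, v⟫ + L / 2 * (2 * s) * ‖v‖ ^ 2 - ⟪f' (a + s • v), v⟫) s := by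
    intro s
    have h1 : HasDerivAt (fun s : ℝ => f a + s * ⟪f' a, v⟫ + L / 2 * s ^ 2 * ‖v‖ ^ 2)
        (⟪f' a, v⟫ + L / 2 * (2 * s) * ‖v‖ ^ 2) s := by
      have ha : HasDerivAt (fun s : ℝ => f a + s * ⟪f' a, v⟫) (⟪f' a, v⟫) s := by
        simpa using ((hasDerivAt_id s).mul_const ⟪f' a, v⟫).const_add (f a)
      have hb : HasDerivAt (fun s : ℝ => L / 2 * s ^ 2 * ‖v‖ ^ 2) (L / 2 * (2 * s) * ‖v‖ ^ 2) s := by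
        have : HasDerivAt (fun s : ℝ => s ^ 2) (2 * s) s := by
          simpa using hasDerivAt_pow 2 s
        simpa [mul_assoc, mul_comm, mul_left_comm] using (this.const_mul (L / 2)).mul_const (‖v‖ ^ 2)
      exact ha.add hb
    exact h1.sub (line_hasDerivAt f f' hdiff a v s)
  have hmono : MonotoneOn h (Set.Icc 0 1) := by
    apply monotoneOn_of_deriv_nonneg (convex_Icc 0 1)
    · exact fun s _ => ((hder s).continuousAt).continuousWithinAt
    · exact fun s _ => ((hder s).differentiableAt).differentiableWithinAt
    · intro s hs
      rw [interior_Icc] at hs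
      rw [(hder s).deriv]
      have hb : ⟪f' (a + s • v) - f' a, v⟫ ≤ L * s * ‖v‖ ^ 2 := by
        calc ⟪f' (a + s • v) - f' a, v⟫ ≤ ‖f' (a + s • v) - f' a‖ * ‖v‖ :=
              real_inner_le_norm _ _
          _ ≤ (L * ‖(a + s • v) - a‖) * ‖v‖ := by
              gcongr; exact hlip _ _
          _ = L * s * ‖v‖ ^ 2 := by
              rw [add_sub_cancel_left, norm_smul, Real.norm_eq_abs,
                abs_of_pos hs.1]; ring
      rw [inner_sub_left] at hb
      nlinarith [hb]
  have hkey := hmono (Set.left_mem_Icc.mpr zero_le_one) (Set.right_mem_Icc.mpr zero_le_one)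
    zero_le_one
  have h0 : h 0 = 0 := by simp [hh]
  have h1 : h 1 = f a + ⟪f' a, v⟫ + L / 2 * ‖v‖ ^ 2 - f b := by
    simp only [hh, one_smul, one_pow, mul_one, one_mul]
    rw [show a + v = b by rw [hv]; abel]
  rw [h0, h1] at hkey
  linarith

/-- One-step progress bound for gradient descent on a convex function with `L`-Lipschitz
gradient: `f y - f x* ≤ (1/(2t)) (‖x - x*‖² - ‖y - x*‖²)` where `y = x - t ∇f(x)`. -/
theorem gradient_step_progress_bound
    (n : ℕ) (f : EuclideanSpace ℝ (Fin n) → ℝ) (f' : EuclideanSpace ℝ (Fin n) → EuclideanSpace ℝ (Fin n))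
    (hdiff : ∀ x, HasGradientAt f (f' x) x)
    (hconv : ConvexOn ℝ Set.univ f)
    (L : ℝ) (hL : 0 < L)
    (hlip : ∀ x y, ‖f' x - f' y‖ ≤ L * ‖x - y‖)
    (xstar : EuclideanSpace ℝ (Fin n)) (hmin : ∀ x, f xstar ≤ f x)
    (t : ℝ) (ht : 0 < t) (htL : t ≤ 1 / L)
    (x y : EuclideanSpace ℝ (Fin n)) (hy : y = x - t • f' x) :
    f y - f xstar ≤ (1 / (2 * t)) * (‖x - xstar‖ ^ 2 - ‖y - xstar‖ ^ 2) := by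
  set g := f' x with hg
  have hyx : y - x = -(t • g) := by rw [hy]; abel
  have hdesc := descent_lemma f f' hdiff L hlip x y
  rw [hyx] at hdesc
  have hdesc2 : f y ≤ f x - t * ‖g‖ ^ 2 + L * t ^ 2 / 2 * ‖g‖ ^ 2 := by
    have e1 : ⟪g, -(t • g)⟫ = -(t * ‖g‖ ^ 2) := by
      rw [inner_neg_right, real_inner_smul_right, real_inner_self_eq_norm_sq]
    have e2 : ‖-(t • g)‖ ^ 2 = t ^ 2 * ‖g‖ ^ 2 := by
      rw [norm_neg, norm_smul, Real.norm_eq_abs, mul_pow, sq_abs]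
    rw [e1, e2] at hdesc
    linarith
  have hLt : L * t ≤ 1 := by
    have := (le_div_iff₀ hL).mp htL; linarith
  have hdesc3 : f y ≤ f x - t / 2 * ‖g‖ ^ 2 := by
    have hq : L * t ^ 2 * ‖g‖ ^ 2 ≤ t * ‖g‖ ^ 2 := by
      have h1 : L * t ^ 2 ≤ t := by nlinarith
      exact mul_le_mul_of_nonneg_right h1 (sq_nonneg _)
    linarith
  have hsub := subgrad_ineq f f' hdiff hconv x xstar
  have hsub2 : f x ≤ f xstar + ⟪g, x - xstar⟫ := by
    have e : ⟪f' x, xstar - x⟫ = -⟪g, x - xstar⟫ := by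
      rw [← inner_neg_right]; congr 1; abel
    rw [e] at hsub; linarith
  have hrhs : (1 / (2 * t)) * (‖x - xstar‖ ^ 2 - ‖y - xstar‖ ^ 2)
      = ⟪g, x - xstar⟫ - t / 2 * ‖g‖ ^ 2 := by
    have e1 : y - xstar = (x - xstar) - t • g := by rw [hy]; abel
    have e2 : ‖x - xstar - t • g‖ ^ 2
        = ‖x - xstar‖ ^ 2 - 2 * (t * ⟪g, x - xstar⟫) + t ^ 2 * ‖g‖ ^ 2 := by
      rw [norm_sub_sq_real, real_inner_smul_right, norm_smul, Real.norm_eq_abs,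
        abs_of_pos ht, mul_pow, real_inner_comm]
    rw [e1, e2]
    field_simp
    ring
  rw [hrhs]
  linarith
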